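/- Let (A_1,...,A_d) be a commuting tuple of N×N complex matrices. If det(α_1 A_1 + α_2 A_2 + ... + α_d A_d) = 0 for every α = (α_1,...,α_d) ∈ ℂ^d, then (0,0,...,0) is a joint eigenvalue of (A_1,...,A_d), i.e., there is a nonzero vector v with A_j v = 0 for all j. -/

import Mathlib

open Matrix Module Set Function

-- auxiliary: choose α avoiding finitely many nonzero "hyperplanes"
lemma aux_avoid (d : ℕ) (T : Finset (Fin d → ℂ)) (hT : ∀ χ ∈ T, χ ≠ 0) :
    ∃ α : Fin d → ℂ, ∀ χ ∈ T, ∑ j, α j * χ j ≠ 0 := by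
  by_contra h
  push_neg at h
  set P : MvPolynomial (Fin d) ℂ :=
    ∏ χ ∈ T, ∑ j, MvPolynomial.C (χ j) * MvPolynomial.X j with hP
  have hPz : P = 0 := by
    apply MvPolynomial.funext
    intro α
    obtain ⟨χ, hχT, hχ⟩ := h α
    rw [map_zero, hP, map_prod]
    apply Finset.prod_eq_zero hχT
    simpa [mul_comm] using hχ
  rw [hP, Finset.prod_eq_zero_iff] at hPz
  obtain ⟨χ, hχT, hχ⟩ := hPz
  refine hT χ hχT (funext fun j => ?_)
  have := congrArg (MvPolynomial.eval (Pi.single j 1)) hχ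
  simpa [Pi.single_apply, Finset.sum_ite_eq] using this

lemma aux_key {N d : ℕ} (f : Fin d → Module.End ℂ (Fin N → ℂ))
    (hfc : ∀ i j, Commute (f i) (f j)) (χ : Fin d → ℂ) (α : Fin d → ℂ) :
    (⨅ j, (f j).maxGenEigenspace (χ j)) ≤
      (∑ j, α j • f j).maxGenEigenspace (∑ j, α j * χ j) := by
  classical
  set W : Submodule ℂ (Fin N → ℂ) := ⨅ j, (f j).maxGenEigenspace (χ j) with hW
  have hWmapsTo : ∀ (g : Module.End ℂ (Fin N → ℂ)), (∀ j, Commute (f j) g) →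
      MapsTo g W W := by
    intro g hg x hx
    simp only [SetLike.mem_coe, hW, Submodule.mem_iInf] at hx ⊢
    exact fun j => Module.End.mapsTo_maxGenEigenspace_of_comm (hg j) (χ j) (hx j)
  have halg : ∀ (g : Module.End ℂ (Fin N → ℂ)) (c : ℂ),
      Commute g (algebraMap ℂ (Module.End ℂ (Fin N → ℂ)) c) :=
    fun g c => (Algebra.commutes c g).symm
  set μ : ℂ := ∑ j, α j * χ j with hμ
  set B : Module.End ℂ (Fin N → ℂ) := ∑ j, α j • f j with hB
  have hBc : ∀ j, Commute (f j) (B - algebraMap ℂ _ μ) := by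
    intro j
    refine Commute.sub_right ?_ (halg _ _)
    exact Commute.sum_right _ _ _ (fun i _ => (hfc j i).smul_right (α i))
  have hic : ∀ i j, Commute (f j) (f i - algebraMap ℂ _ (χ i)) :=
    fun i j => Commute.sub_right (hfc j i) (halg _ _)
  have hBmapsTo : ∀ x ∈ W, (B - algebraMap ℂ (Module.End ℂ (Fin N → ℂ)) μ) x ∈ W :=
    fun x hx => hWmapsTo _ hBc hx
  have h_i : ∀ i, ∀ x ∈ W, (f i - algebraMap ℂ (Module.End ℂ (Fin N → ℂ)) (χ i)) x ∈ W :=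
    fun i x hx => hWmapsTo _ (hic i) hx
  have hnil : ∀ i, IsNilpotent ((f i - algebraMap ℂ _ (χ i)).restrict (h_i i)) := by
    intro i
    apply Module.End.isNilpotent_restrict_of_le (q := (f i).maxGenEigenspace (χ i)) (iInf_le _ i)
    exact Module.End.isNilpotent_restrict_maxGenEigenspace_sub_algebraMap (f i) (χ i)
  have hres : (B - algebraMap ℂ _ μ).restrict hBmapsTo
      = ∑ i, α i • ((f i - algebraMap ℂ _ (χ i)).restrict (h_i i)) := by
    refine LinearMap.ext fun x => Subtype.ext ?_
    simp only [LinearMap.restrict_coe_apply, LinearMap.sum_apply, LinearMap.smul_apply,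
      LinearMap.sub_apply, Module.algebraMap_end_apply, AddSubmonoidClass.coe_finset_sum,
      SetLike.val_smul, LinearMap.restrict_coe_apply, hB, hμ, smul_sub, smul_smul,
      Finset.sum_sub_distrib, Finset.sum_smul]
  have hrescomm : ∀ i j, Commute ((f i - algebraMap ℂ _ (χ i)).restrict (h_i i))
      ((f j - algebraMap ℂ _ (χ j)).restrict (h_i j)) := by
    intro i j
    have hcij : Commute (f i - algebraMap ℂ _ (χ i)) (f j - algebraMap ℂ _ (χ j)) :=
      Commute.sub_left (hic j i) (Commute.sub_right (halg (f j) (χ i)).symm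
        (halg (algebraMap ℂ (Module.End ℂ (Fin N → ℂ)) (χ j)) (χ i)).symm)
    refine LinearMap.ext fun x => Subtype.ext ?_
    have := LinearMap.congr_fun hcij (x : Fin N → ℂ)
    simpa [Module.End.mul_apply] using this
  have hnilB : IsNilpotent ((B - algebraMap ℂ _ μ).restrict hBmapsTo) := by
    rw [hres]
    exact Commute.isNilpotent_sum (fun i _ => (hnil i).smul (α i))
      (fun i j _ _ => ((hrescomm i j).smul_right (α j)).smul_left (α i))
  obtain ⟨n, hn⟩ := hnilB
  intro x hx
  rw [Module.End.mem_maxGenEigenspace]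
  refine ⟨n, ?_⟩
  have h1 := LinearMap.congr_fun hn (⟨x, hx⟩ : W)
  rw [Module.End.pow_restrict] at h1
  have h2 := congrArg Subtype.val h1
  simpa [LinearMap.restrict_apply, ← Module.algebraMap_end_eq_smul_id,
    Algebra.algebraMap_eq_smul_one] using h2

theorem stmt_1 (d N : ℕ)
    (A : Fin d → Matrix (Fin N) (Fin N) ℂ)
    (hcomm : ∀ i j, Commute (A i) (A j))
    (hdet : ∀ α : Fin d → ℂ, (∑ j, α j • A j).det = 0) :
    ∃ v : Fin N → ℂ, v ≠ 0 ∧ ∀ j, A j *ᵥ v = 0 := by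
  classical
  set e : Matrix (Fin N) (Fin N) ℂ ≃ₐ[ℂ] Module.End ℂ (Fin N → ℂ) :=
    Matrix.toLinAlgEquiv' with he
  set f : Fin d → Module.End ℂ (Fin N → ℂ) := fun j => e (A j) with hf
  have hfc : ∀ i j, Commute (f i) (f j) := fun i j => (hcomm i j).map e.toAlgHom
  have hfapp : ∀ j v, f j v = A j *ᵥ v := fun j v => Matrix.toLinAlgEquiv'_apply (A j) v
  set Vχ : (Fin d → ℂ) → Submodule ℂ (Fin N → ℂ) :=
    fun χ => ⨅ j, (f j).maxGenEigenspace (χ j) with hVχ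
  have htop : ⨆ χ, Vχ χ = ⊤ :=
    Module.End.iSup_iInf_maxGenEigenspace_eq_top_of_iSup_maxGenEigenspace_eq_top_of_commute f
      (fun i j _ => hfc i j) (fun i => Module.End.iSup_maxGenEigenspace_eq_top (f i))
  -- Step A : the joint generalized 0-eigenspace is nonzero
  have hV0 : Vχ 0 ≠ ⊥ := by
    by_contra hV0
    have hSfin : {χ : Fin d → ℂ | Vχ χ ≠ ⊥}.Finite := by
      apply Set.Finite.subset
        (Set.Finite.pi (fun j => Module.End.finite_hasEigenvalue (f j)))
      intro χ hχ
      simp only [Set.mem_pi, Set.mem_univ, forall_true_left]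
      intro j
      have hne : (f j).maxGenEigenspace (χ j) ≠ ⊥ := by
        intro hb
        exact hχ (le_bot_iff.mp (hb ▸ iInf_le (fun j => (f j).maxGenEigenspace (χ j)) j))
      have : (f j).HasUnifEigenvalue (χ j) ⊤ := hne
      exact (Module.End.hasUnifEigenvalue_iff_hasUnifEigenvalue_one (by norm_num)).mp this
    obtain ⟨α, hα⟩ := aux_avoid d hSfin.toFinset
      (by intro χ hχ h0; rw [Set.Finite.mem_toFinset] at hχ; exact hχ (h0 ▸ hV0))
    set B : Module.End ℂ (Fin N → ℂ) := ∑ j, α j • f j with hB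
    obtain ⟨v, hv0, hv⟩ := (Matrix.exists_mulVec_eq_zero_iff).mpr (hdet α)
    have hBv : B v = 0 := by
      have hBe : B = e (∑ j, α j • A j) := by simp [hB, hf, map_sum]
      rw [hBe, Matrix.toLinAlgEquiv'_apply, hv]
    have hvmem : v ∈ B.maxGenEigenspace 0 := by
      rw [Module.End.mem_maxGenEigenspace]
      exact ⟨1, by simp [hBv]⟩
    have hS : (⊤ : Submodule ℂ (Fin N → ℂ)) ≤
        ⨆ μ, ⨆ _ : μ ≠ (0 : ℂ), B.maxGenEigenspace μ := by
      rw [← htop]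
      apply iSup_le
      intro χ
      rcases eq_or_ne (Vχ χ) ⊥ with h | h
      · rw [h]; exact bot_le
      · have hμ : (∑ j, α j * χ j) ≠ 0 := hα χ (hSfin.mem_toFinset.mpr h)
        refine le_trans (aux_key f hfc χ α) ?_
        exact le_iSup₂ (f := fun μ (_ : μ ≠ (0 : ℂ)) => B.maxGenEigenspace μ) (∑ j, α j * χ j) hμ
    have hdisj := (Module.End.independent_maxGenEigenspace B) 0
    exact hv0 ((Submodule.mem_bot ℂ).mp
      (hdisj.le_bot ⟨hvmem, hS (Submodule.mem_top)⟩))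
  -- Step B : extract a joint kernel vector
  have key : ∀ k : ℕ, ∃ v : Fin N → ℂ, v ≠ 0 ∧ v ∈ Vχ 0 ∧
      ∀ j : Fin d, (j : ℕ) < k → f j v = 0 := by
    intro k
    induction k with
    | zero =>
      obtain ⟨v, hv, h0⟩ := Submodule.exists_mem_ne_zero_of_ne_bot hV0
      exact ⟨v, h0, hv, fun j hj => absurd hj (by omega)⟩
    | succ k ih =>
      obtain ⟨v, hv0, hvV, hvk⟩ := ih
      by_cases hkd : k < d
      · set jk : Fin d := ⟨k, hkd⟩ with hjk
        have hex : ∃ m, ((f jk) ^ m) v = 0 := by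
          have h1 : v ∈ (f jk).maxGenEigenspace ((0 : Fin d → ℂ) jk) :=
            (Submodule.mem_iInf _).mp hvV jk
          rw [Module.End.mem_maxGenEigenspace] at h1
          simpa using h1
        set m := Nat.find hex with hm
        have hm0 : m ≠ 0 := by
          intro h0
          have := Nat.find_spec hex
          rw [← hm, h0] at this
          simp at this
          exact hv0 this
        set u : Fin N → ℂ := ((f jk) ^ (m - 1)) v with hu
        have hu0 : u ≠ 0 := Nat.find_min hex (by omega)
        have hfku : f jk u = 0 := by
          have : ((f jk) ^ m) v = 0 := Nat.find_spec hex
          rw [hu, ← Module.End.mul_apply, ← pow_succ']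
          have hms : m - 1 + 1 = m := Nat.succ_pred_eq_of_ne_zero hm0
          rw [hms]
          exact this
        have huV : u ∈ Vχ 0 := by
          rw [hVχ, Submodule.mem_iInf]
          intro j
          have hmap : MapsTo ⇑((f jk) ^ (m - 1))
              ↑((f j).maxGenEigenspace ((0 : Fin d → ℂ) j))
              ↑((f j).maxGenEigenspace ((0 : Fin d → ℂ) j)) :=
            Module.End.mapsTo_maxGenEigenspace_of_comm ((hfc j jk).pow_right _) _
          exact hmap ((Submodule.mem_iInf _).mp hvV j)
        refine ⟨u, hu0, huV, fun j hj => ?_⟩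
        rcases lt_or_eq_of_le (Nat.lt_succ_iff.mp hj) with hlt | heq
        · have hcj : Commute (f j) ((f jk) ^ (m - 1)) := (hfc j jk).pow_right _
          have := LinearMap.congr_fun hcj v
          rw [Module.End.mul_apply, Module.End.mul_apply] at this
          rw [this, hvk j hlt, map_zero]
        · have : j = jk := Fin.ext heq
          rw [this, hfku]
      · exact ⟨v, hv0, hvV, fun j hj => hvk j (by omega)⟩
  obtain ⟨v, hv0, -, hv⟩ := key d
  exact ⟨v, hv0, fun j => by rw [← hfapp, hv j j.isLt]⟩
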